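/- (Power-output hierarchy, Eq. 7b) Let T > 0, L₂₂ > 0, X₂ ≠ 0 and let q satisfy 2√2/3 < q < 1. Then the reduced power output P(x) = −T·L₂₂·X₂²·x·(x + q), evaluated at the six optimal force ratios, satisfies the strict chain P(x_mdf) < P(x_Mη) < P(x_MEF) < P(x_MΩ) < P(x_MPη) < P(x_MPO), where P(x_mdf) = 0. -/

import Mathlib

/-- Optimal force ratio for minimum dissipation function: `x_mdf = −q`. -/
noncomputable def xmdf (q : ℝ) : ℝ := -q

/-- Optimal force ratio for maximum power output: `x_MPO = −q/2`. -/
noncomputable def xMPO (q : ℝ) : ℝ := -q / 2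

/-- Optimal force ratio for maximum efficiency: `x_Mη = −q/(1 + √(1 − q²))`. -/
noncomputable def xMeta (q : ℝ) : ℝ := -q / (1 + Real.sqrt (1 - q ^ 2))

/-- Optimal force ratio for maximum ecological function: `x_MEF = −3q/4`. -/
noncomputable def xMEF (q : ℝ) : ℝ := -(3 * q) / 4

/-- Optimal force ratio for maximum omega function:
`x_MΩ = −q·(4 − q² + 4√(1 − q²))/(4·(1 + √(1 − q²))²)`. -/
noncomputable def xMOmega (q : ℝ) : ℝ :=
  -(q * (4 - q ^ 2 + 4 * Real.sqrt (1 - q ^ 2))) / (4 * (1 + Real.sqrt (1 - q ^ 2)) ^ 2)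

/-- Optimal force ratio for maximum efficient power:
`x_MPη = −(4 + q² − √(16 − 16q² + q⁴))/(6q)`. -/
noncomputable def xMPeta (q : ℝ) : ℝ :=
  -(4 + q ^ 2 - Real.sqrt (16 - 16 * q ^ 2 + q ^ 4)) / (6 * q)

/-- Reduced power output `P(x) = −T·L₂₂·X₂²·x·(x + q)`. -/
noncomputable def powerX (T L22 X2 q x : ℝ) : ℝ :=
  -(T * L22 * X2 ^ 2 * (x * (x + q)))

set_option maxHeartbeats 1000000 in
/-- (Power-output hierarchy, Eq. 7b) For `2√2/3 < q < 1`, the reduced power output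
evaluated at the six optimal force ratios satisfies
`P(x_mdf) < P(x_Mη) < P(x_MEF) < P(x_MΩ) < P(x_MPη) < P(x_MPO)`, with `P(x_mdf) = 0`. -/
theorem power_hierarchy (T L22 X2 q : ℝ) (hT : 0 < T) (hL22 : 0 < L22)
    (hX2 : X2 ≠ 0) (hq0 : 2 * Real.sqrt 2 / 3 < q) (hq1 : q < 1) :
    powerX T L22 X2 q (xmdf q) = 0 ∧
    powerX T L22 X2 q (xmdf q) < powerX T L22 X2 q (xMeta q) ∧
    powerX T L22 X2 q (xMeta q) < powerX T L22 X2 q (xMEF q) ∧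
    powerX T L22 X2 q (xMEF q) < powerX T L22 X2 q (xMOmega q) ∧
    powerX T L22 X2 q (xMOmega q) < powerX T L22 X2 q (xMPeta q) ∧
    powerX T L22 X2 q (xMPeta q) < powerX T L22 X2 q (xMPO q) := by
  have hs2' : Real.sqrt 2 ^ 2 = 2 := Real.sq_sqrt (by norm_num)
  have hs2nn : (0:ℝ) ≤ Real.sqrt 2 := Real.sqrt_nonneg 2
  have hqpos : 0 < q := lt_trans (by positivity) hq0
  have hq2 : 8/9 < q ^ 2 := by
    nlinarith [mul_pos (sub_pos.mpr hq0) (show (0:ℝ) < q + 2 * Real.sqrt 2 / 3 by positivity)]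
  have h1q2 : 0 < 1 - q ^ 2 := by nlinarith [mul_pos hqpos hqpos]
  have hc : 0 < T * L22 * X2 ^ 2 := by positivity
  set c := T * L22 * X2 ^ 2 with hc_def
  set s := Real.sqrt (1 - q ^ 2) with hs_def
  have hs2 : s ^ 2 = 1 - q ^ 2 := Real.sq_sqrt h1q2.le
  have hs_pos : 0 < s := Real.sqrt_pos.mpr h1q2
  have hs13 : s < 1/3 := by nlinarith [sq_nonneg (s - 1/3)]
  have hq2s : q ^ 2 = 1 - s ^ 2 := by linarith
  have hq4 : q ^ 4 = (1 - s ^ 2) ^ 2 := by linear_combination (q ^ 2 + 1 - s ^ 2) * hq2s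
  have hrarg : 0 < 16 - 16 * q ^ 2 + q ^ 4 := by linarith [sq_nonneg (q ^ 2)]
  set r := Real.sqrt (16 - 16 * q ^ 2 + q ^ 4) with hr_def
  have hr2 : r ^ 2 = 16 - 16 * q ^ 2 + q ^ 4 := Real.sq_sqrt hrarg.le
  have hr_pos : 0 < r := Real.sqrt_pos.mpr hrarg
  have hr2' : r ^ 2 = s ^ 4 + 14 * s ^ 2 + 1 := by
    rw [hr2]; linear_combination (-(s ^ 2) - (1 - q ^ 2) - 14) * hs2
  have h1s : (0:ℝ) < 1 + s := by linarith
  have hqne : q ≠ 0 := ne_of_gt hqpos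
  have h1sne : (1:ℝ) + s ≠ 0 := ne_of_gt h1s
  have hq2pos : 0 < q ^ 2 := by positivity
  have hcq : 0 < c * q ^ 2 := mul_pos hc hq2pos
  have h1s2 : 0 < (1 + s) ^ 2 := by positivity
  -- evaluated power values
  have e1 : powerX T L22 X2 q (xmdf q) = 0 := by
    simp only [powerX, xmdf]; ring
  have e2 : powerX T L22 X2 q (xMeta q) = c * (q ^ 2 * s) / (1 + s) ^ 2 := by
    simp only [powerX, xMeta, ← hs_def]; field_simp; ring
  have e3 : powerX T L22 X2 q (xMEF q) = c * (3 * q ^ 2) / 16 := by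
    simp only [powerX, xMEF]; ring
  have e4 : powerX T L22 X2 q (xMPO q) = c * q ^ 2 / 4 := by
    simp only [powerX, xMPO]; ring
  have hx5 : xMOmega q = -(q * (s + 3)) / (4 * (1 + s)) := by
    simp only [xMOmega, ← hs_def]
    rw [show 4 - q ^ 2 + 4 * s = (1 + s) * (s + 3) by linear_combination (-1) * hs2]
    field_simp
  have e5 : powerX T L22 X2 q (xMOmega q)
      = c * (q ^ 2 * (s + 3) * (3 * s + 1)) / (16 * (1 + s) ^ 2) := by
    simp only [powerX, hx5]; field_simp; ring
  have hE : (4 + q ^ 2 - r) * (5 * q ^ 2 - 4 + r)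
      = 4 * (s ^ 4 - 10 * s ^ 2 + 1 + r * (1 + s ^ 2)) := by
    linear_combination (-4 * r - 5 * s ^ 2 + 5 * q ^ 2 + 21) * hs2 + (-1) * hr2'
  have e6 : powerX T L22 X2 q (xMPeta q)
      = c * (4 * (s ^ 4 - 10 * s ^ 2 + 1 + r * (1 + s ^ 2))) / (36 * q ^ 2) := by
    have h : powerX T L22 X2 q (xMPeta q)
        = c * ((4 + q ^ 2 - r) * (5 * q ^ 2 - 4 + r)) / (36 * q ^ 2) := by
      simp only [powerX, xMPeta, ← hr_def]; field_simp; ring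
    rw [h, hE]
  -- key inequalities
  have hK1 : 11 * s ^ 4 + 36 * s ^ 3 + 34 * s ^ 2 + 36 * s + 11
      < 16 * r * (1 + s ^ 2) := by
    have hb : (0:ℝ) ≤ 16 * r * (1 + s ^ 2) := by positivity
    refine lt_of_pow_lt_pow_left₀ 2 hb ?_
    have hsq : (16 * r * (1 + s ^ 2)) ^ 2
        = 256 * (s ^ 4 + 14 * s ^ 2 + 1) * (1 + s ^ 2) ^ 2 := by
      linear_combination (256 * (1 + s ^ 2) ^ 2) * hr2'
    rw [hsq, ← sub_pos]
    have h1ms : (0:ℝ) < 1 - s := by linarith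
    have h6 : (0:ℝ) < (1 - s) ^ 6 := pow_pos h1ms 6
    have hp : (0:ℝ) < 15 * s ^ 2 + 2 * s + 15 := by positivity
    have hd : 256 * (s ^ 4 + 14 * s ^ 2 + 1) * (1 + s ^ 2) ^ 2
        - (11 * s ^ 4 + 36 * s ^ 3 + 34 * s ^ 2 + 36 * s + 11) ^ 2
        = 9 * ((1 - s) ^ 6 * (15 * s ^ 2 + 2 * s + 15)) := by ring
    rw [hd]
    exact mul_pos (by norm_num) (mul_pos h6 hp)
  have hK2 : 4 * r * (1 + s ^ 2) < 5 * s ^ 4 + 22 * s ^ 2 + 5 := by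
    have hb : (0:ℝ) ≤ 5 * s ^ 4 + 22 * s ^ 2 + 5 := by positivity
    refine lt_of_pow_lt_pow_left₀ 2 hb ?_
    have hsq : (4 * r * (1 + s ^ 2)) ^ 2
        = 16 * (s ^ 4 + 14 * s ^ 2 + 1) * (1 + s ^ 2) ^ 2 := by
      linear_combination (16 * (1 + s ^ 2) ^ 2) * hr2'
    rw [hsq, ← sub_pos]
    have h1ms2 : (0:ℝ) < 1 - s ^ 2 := by nlinarith [mul_pos hs_pos hs_pos]
    have h4 : (0:ℝ) < (1 - s ^ 2) ^ 4 := pow_pos h1ms2 4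
    have hd : (5 * s ^ 4 + 22 * s ^ 2 + 5) ^ 2
        - 16 * (s ^ 4 + 14 * s ^ 2 + 1) * (1 + s ^ 2) ^ 2
        = 9 * (1 - s ^ 2) ^ 4 := by ring
    rw [hd]
    exact mul_pos (by norm_num) h4
  refine ⟨e1, ?_, ?_, ?_, ?_, ?_⟩
  · rw [e1, e2]
    exact div_pos (mul_pos hc (mul_pos hq2pos hs_pos)) h1s2
  · rw [e2, e3, div_lt_div_iff₀ h1s2 (by norm_num), ← sub_pos]
    have ha : (0:ℝ) < 1 - 3 * s := by linarith
    have hb : (0:ℝ) < 3 - s := by linarith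
    have hd : c * (3 * q ^ 2) * (1 + s) ^ 2 - c * (q ^ 2 * s) * 16
        = c * q ^ 2 * ((1 - 3 * s) * (3 - s)) := by ring
    rw [hd]
    exact mul_pos hcq (mul_pos ha hb)
  · rw [e3, e5, div_lt_div_iff₀ (by norm_num) (by positivity), ← sub_pos]
    have hd : c * (q ^ 2 * (s + 3) * (3 * s + 1)) * 16
        - c * (3 * q ^ 2) * (16 * (1 + s) ^ 2) = 64 * (c * q ^ 2 * s) := by ring
    rw [hd]
    exact mul_pos (by norm_num) (mul_pos hcq hs_pos)
  · rw [e5, e6, div_lt_div_iff₀ (by positivity) (by positivity)]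
    have hLHS : c * (q ^ 2 * (s + 3) * (3 * s + 1)) * (36 * q ^ 2)
        = 36 * c * (1 - s ^ 2) ^ 2 * ((s + 3) * (3 * s + 1)) := by
      linear_combination (36 * c * (s + 3) * (3 * s + 1)) * hq4
    rw [hLHS, ← sub_pos]
    have hd : c * (4 * (s ^ 4 - 10 * s ^ 2 + 1 + r * (1 + s ^ 2))) * (16 * (1 + s) ^ 2)
        - 36 * c * (1 - s ^ 2) ^ 2 * ((s + 3) * (3 * s + 1))
        = 4 * (c * (1 + s) ^ 2 * (16 * r * (1 + s ^ 2)
            - (11 * s ^ 4 + 36 * s ^ 3 + 34 * s ^ 2 + 36 * s + 11))) := by ring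
    rw [hd]
    exact mul_pos (by norm_num) (mul_pos (mul_pos hc h1s2) (sub_pos.mpr hK1))
  · rw [e6, e4, div_lt_div_iff₀ (by positivity) (by norm_num)]
    have hRHS : c * q ^ 2 * (36 * q ^ 2) = 36 * c * (1 - s ^ 2) ^ 2 := by
      linear_combination (36 * c) * hq4
    rw [hRHS, ← sub_pos]
    have hd : 36 * c * (1 - s ^ 2) ^ 2
        - c * (4 * (s ^ 4 - 10 * s ^ 2 + 1 + r * (1 + s ^ 2))) * 4
        = 4 * (c * (5 * s ^ 4 + 22 * s ^ 2 + 5 - 4 * r * (1 + s ^ 2))) := by ring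
    rw [hd]
    exact mul_pos (by norm_num) (mul_pos hc (sub_pos.mpr hK2))
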